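/- Every non-identity morphism f : X^* → X^* of a filtered simplicial complex satisfies codeg^∞(f, id_{X^*}) ≥ δ(X^*), where δ(X^*) = min over vertices v of min_{w ≠ v} δ_X(v, w). -/
import Mathlib


open Finset Function

noncomputable section
open scoped Classical

variable {V W U : Type} [Fintype V] [Fintype W] [Fintype U]

/-- A size function is monotone on nonempty subsets. -/
def Monot (D : Finset V → ℝ) : Prop :=
  ∀ ⦃α β : Finset V⦄, α.Nonempty → α ⊆ β → D α ≤ D β

/-- `max 0 (sup over nonempty subsets of the vertex set of g)`. -/
def supSub (g : Finset V → ℝ) : ℝ :=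
  ((Finset.univ : Finset V).powerset.filter Finset.Nonempty).fold max 0 g

/-- Degree of a morphism: least `r ≥ 0` with `D_Y (f α) ≤ D_X α + r` for all nonempty `α`. -/
def degF (DX : Finset V → ℝ) (DY : Finset W → ℝ) (f : V → W) : ℝ :=
  supSub fun α => DY (α.image f) - DX α

/-- Codegree: least `r ≥ 0` with `D_Y (f α ∪ g α) ≤ D_X α + r` for all nonempty `α`. -/
def codegF (DX : Finset V → ℝ) (DY : Finset W → ℝ) (f g : V → W) : ℝ :=
  supSub fun α => DY (α.image f ∪ α.image g) - DX α

/-- `codeg^∞`: minimum over chains `f = F 0, …, F n = g` of the max codegree of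
consecutive terms. -/
def codegInfF (DX : Finset V → ℝ) (DY : Finset W → ℝ) (f g : V → W) : ℝ :=
  sInf { c : ℝ | ∃ n : ℕ, 0 < n ∧ ∃ F : ℕ → V → W, F 0 = f ∧ F n = g ∧
    c = (Finset.range n).fold max 0 fun i => codegF DX DY (F i) (F (i + 1)) }

/-- `(f, g)` is an `ε`-interleaving between the filtered complexes given by `DX`, `DY`. -/
def IsInterleaving (DX : Finset V → ℝ) (DY : Finset W → ℝ)
    (f : V → W) (g : W → V) (ε : ℝ) : Prop :=
  degF DX DY f ≤ ε ∧ degF DY DX g ≤ ε ∧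
  codegInfF DX DX (g ∘ f) id ≤ 2 * ε ∧ codegInfF DY DY (f ∘ g) id ≤ 2 * ε

/-- The interleaving distance between filtered simplicial complexes. -/
def dIF (DX : Finset V → ℝ) (DY : Finset W → ℝ) : ℝ :=
  sInf { ε : ℝ | 0 ≤ ε ∧ ∃ f g, IsInterleaving DX DY f g ε }

/-- The vertex quasi-distance `δ_X(v,w)`. -/
def vqd (D : Finset V → ℝ) (v w : V) : ℝ :=
  supSub fun α => D (insert w α) - D (insert v α)

/-- Distortion of a correspondence `R ⊆ V × W`, viewed as a tripod via the projections. -/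
def corDis (DX : Finset V → ℝ) (DY : Finset W → ℝ) (R : Finset (V × W)) : ℝ :=
  (R.powerset.filter Finset.Nonempty).fold max 0 fun α =>
    |DX (α.image Prod.fst) - DY (α.image Prod.snd)|

/-- Gromov–Hausdorff distance (via correspondences). -/
def dGHcor (DX : Finset V → ℝ) (DY : Finset W → ℝ) : ℝ :=
  (1 / 2) * sInf { c : ℝ | ∃ R : Finset (V × W),
    (∀ v : V, ∃ w, (v, w) ∈ R) ∧ (∀ w : W, ∃ v, (v, w) ∈ R) ∧ c = corDis DX DY R }

/-- Distortion of a tripod `(Z, p, q)`. -/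
def trdis (DX : Finset V → ℝ) (DY : Finset W → ℝ) {Z : Type} [Fintype Z]
    (p : Z → V) (q : Z → W) : ℝ :=
  supSub fun α : Finset Z => |DX (α.image p) - DY (α.image q)|

/-- Gromov–Hausdorff distance between filtered simplicial complexes (via tripods). -/
def dGHtri (DX : Finset V → ℝ) (DY : Finset W → ℝ) : ℝ :=
  (1 / 2) * sInf { c : ℝ | ∃ (Z : Type) (_i : Fintype Z) (p : Z → V) (q : Z → W),
    Surjective p ∧ Surjective q ∧ c = trdis DX DY p q }

/-- Diameter of a finite subset of a metric space. -/
def fdiam {M : Type} [MetricSpace M] (σ : Finset M) : ℝ :=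
  (σ ×ˢ σ).fold max 0 fun p => dist p.1 p.2

/-- Metric distortion of a correspondence between metric spaces. -/
def metDis {M N : Type} [MetricSpace M] [MetricSpace N] (R : Finset (M × N)) : ℝ :=
  (R ×ˢ R).fold max 0 fun p => |dist p.1.1 p.2.1 - dist p.1.2 p.2.2|

/-- Gromov–Hausdorff distance between finite metric spaces. -/
def dGHmet (M N : Type) [MetricSpace M] [MetricSpace N] : ℝ :=
  (1 / 2) * sInf { c : ℝ | ∃ R : Finset (M × N),
    (∀ x : M, ∃ y, (x, y) ∈ R) ∧ (∀ y : N, ∃ x, (x, y) ∈ R) ∧ c = metDis R }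

lemma supSub_nonneg (g : Finset V → ℝ) : 0 ≤ supSub g :=
  (Finset.le_fold_max 0).mpr (Or.inl le_rfl)

lemma le_supSub (g : Finset V → ℝ) {α : Finset V} (hα : α.Nonempty) :
    g α ≤ supSub g := by
  exact (Finset.le_fold_max _).mpr (Or.inr ⟨α, by simp [hα], le_rfl⟩)

lemma supSub_le {g : Finset V → ℝ} {r : ℝ} (h0 : 0 ≤ r)
    (h : ∀ α : Finset V, α.Nonempty → g α ≤ r) : supSub g ≤ r := by
  apply (Finset.fold_max_le _).mpr
  refine ⟨h0, fun α hα => ?_⟩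
  simp only [Finset.mem_filter, Finset.mem_powerset] at hα
  exact h α hα.2

lemma vqd_le_codeg (D : Finset V → ℝ) (hD : Monot D) (g : V → V) {v : V}
    (hv : g v ≠ v) : vqd D v (g v) ≤ codegF D D g id := by
  apply supSub_le (supSub_nonneg _)
  intro α hα
  rw [sub_le_iff_le_add]
  set β := insert v α with hβ
  have hsub : insert (g v) α ⊆ β.image g ∪ β.image id := by
    intro x hx
    rcases Finset.mem_insert.mp hx with h | h
    · exact Finset.mem_union_left _ (Finset.mem_image.mpr ⟨v, Finset.mem_insert_self _ _, h.symm⟩)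
    · exact Finset.mem_union_right _
        (Finset.mem_image.mpr ⟨x, Finset.mem_insert_of_mem h, rfl⟩)
  have h1 : D (insert (g v) α) ≤ D (β.image g ∪ β.image id) :=
    hD (Finset.insert_nonempty _ _) hsub
  have h2 : D (β.image g ∪ β.image id) - D β ≤ codegF D D g id :=
    le_supSub (fun γ => D (γ.image g ∪ γ.image id) - D γ) (Finset.insert_nonempty v α)
  unfold codegF at h2
  linarith

/-- every non-identity self-morphism `f` satisfies
`codeg^∞(f, id) ≥ δ(X^*)`, where `δ(X^*) = min_v min_{w ≠ v} δ_X(v, w)`. -/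
theorem stmt_17 (D : Finset V → ℝ) (hD : Monot D) (f : V → V) (hf : f ≠ id) :
    sInf { d : ℝ | ∃ v w : V, w ≠ v ∧ d = vqd D v w } ≤ codegInfF D D f id := by
  apply le_csInf
  · refine ⟨_, 1, one_pos, fun i => if i = 0 then f else id, by simp, by simp, rfl⟩
  · rintro c ⟨n, hn, F, hF0, hFn, rfl⟩
    -- largest index with `F i ≠ id`
    set P : ℕ → Prop := fun j => F j ≠ id with hP
    set i := Nat.findGreatest P n with hi
    have hPi : P i := Nat.findGreatest_spec (Nat.zero_le n) (by simpa [P, hF0] using hf)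
    have hile : i ≤ n := Nat.findGreatest_le n
    have hin : i ≠ n := fun h => hPi (h ▸ hFn)
    have hilt : i < n := lt_of_le_of_ne hile hin
    have hFi1 : F (i + 1) = id := by
      by_contra h
      exact Nat.findGreatest_is_greatest (Nat.lt_succ_self i) hilt h
    -- some vertex moved by F i
    obtain ⟨v, hv⟩ : ∃ v, F i v ≠ v := by
      by_contra h
      push_neg at h
      exact hPi (funext h)
    have h1 : vqd D v (F i v) ≤ codegF D D (F i) (F (i + 1)) := by
      rw [hFi1]; exact vqd_le_codeg D hD (F i) hv
    have h2 : codegF D D (F i) (F (i + 1)) ≤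
        (Finset.range n).fold max 0 fun j => codegF D D (F j) (F (j + 1)) :=
      (Finset.le_fold_max _).mpr (Or.inr ⟨i, Finset.mem_range.mpr hilt, le_rfl⟩)
    have hmem : vqd D v (F i v) ∈ { d : ℝ | ∃ v w : V, w ≠ v ∧ d = vqd D v w } :=
      ⟨v, F i v, hv, rfl⟩
    have hbdd : BddBelow { d : ℝ | ∃ v w : V, w ≠ v ∧ d = vqd D v w } := by
      refine ⟨0, ?_⟩
      rintro d ⟨v, w, _, rfl⟩
      exact supSub_nonneg _
    calc sInf _ ≤ vqd D v (F i v) := csInf_le hbdd hmem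
      _ ≤ _ := h1.trans h2
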